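/- arXiv:1910.04258 — 3 statements merged into one kernel-verified Lean document; each statement's English description precedes it below -/
import Mathlib

section
/- For any integer r ≥ 1 and any n > r, the r-th moment of the number of type B descents of a uniformly random element of B_n^+ equals the r-th moment of the number of type B descents of a uniformly random element of B_n. -/
open scoped Classical

/-- An element of the hyperoctahedral group `B_n`, encoded as an underlying
permutation `u ∈ S_n` together with the set of negated positions (`true` = negated). -/
abbrev BPerm (n : ℕ) := Equiv.Perm (Fin n) × (Fin n → Bool)

/-- The one-line value `w(i)` (as an integer, positions and values `1,…,n`)
of the signed permutation, with the convention `w(0) = 0`. -/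
noncomputable def bval {n : ℕ} (p : BPerm n) (i : ℕ) : ℤ :=
  if h : 1 ≤ i ∧ i ≤ n then
    (if p.2 ⟨i - 1, by omega⟩ then -(((p.1 ⟨i - 1, by omega⟩ : Fin n) : ℕ) + 1 : ℤ)
      else (((p.1 ⟨i - 1, by omega⟩ : Fin n) : ℕ) + 1 : ℤ))
  else 0

/-- The number of type B descents: `0 ≤ i ≤ n-1` with `w(i) > w(i+1)`, where `w(0)=0`. -/
noncomputable def desB {n : ℕ} (p : BPerm n) : ℕ :=
  ((Finset.range n).filter (fun i => bval p (i + 1) < bval p i)).card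

/-- The sign character of `B_n`: `sgn_B(u^J) = (-1)^{|J|} sgn(u)`. -/
noncomputable def sgnB {n : ℕ} (p : BPerm n) : ℤ :=
  (Equiv.Perm.sign p.1 : ℤ) * (-1) ^ ((Finset.univ.filter (fun i => p.2 i = true)).card)


open Finset Equiv

namespace BProof
variable {m : ℕ}

noncomputable def extPerm (σ : Perm (Fin m)) : Perm (Fin (m+1)) :=
  finSuccEquivLast.symm.permCongr σ.optionCongr

@[simp] lemma extPerm_castSucc (σ : Perm (Fin m)) (i : Fin m) :
    extPerm σ i.castSucc = (σ i).castSucc := by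
  simp [extPerm, Equiv.permCongr_apply]

@[simp] lemma extPerm_last (σ : Perm (Fin m)) : extPerm σ (Fin.last m) = Fin.last m := by
  simp [extPerm, Equiv.permCongr_apply]

lemma sign_extPerm (σ : Perm (Fin m)) : Equiv.Perm.sign (extPerm σ) = Equiv.Perm.sign σ := by
  rw [extPerm, Equiv.Perm.sign_permCongr, Equiv.optionCongr_sign]

noncomputable def Phi (x : BPerm m × Bool) : BPerm (m+1) :=
  (extPerm x.1.1, Fin.snoc x.1.2 x.2)

lemma bval_bounds {n : ℕ} (p : BPerm n) (i : ℕ) : -(n:ℤ) ≤ bval p i ∧ bval p i ≤ n := by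
  unfold bval
  split
  · next h =>
    have h2 : ((p.1 ⟨i - 1, by omega⟩ : Fin n) : ℕ) < n := (p.1 _).is_lt
    split <;> push_cast <;> omega
  · constructor <;> simp

lemma bval_Phi (x : BPerm m × Bool) (i : ℕ) (hi : i ≤ m) : bval (Phi x) i = bval x.1 i := by
  unfold bval Phi
  by_cases h : 1 ≤ i ∧ i ≤ m
  · rw [dif_pos (by omega : 1 ≤ i ∧ i ≤ m + 1), dif_pos h]
    have he : (⟨i - 1, by omega⟩ : Fin (m+1)) = Fin.castSucc ⟨i - 1, by omega⟩ := rfl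
    dsimp only
    rw [he, extPerm_castSucc]; simp only [Fin.snoc_castSucc]
    simp
  · rw [dif_neg (by omega), dif_neg h]

lemma bval_Phi_last (x : BPerm m × Bool) :
    bval (Phi x) (m+1) = if x.2 then -((m:ℤ)+1) else (m:ℤ)+1 := by
  unfold bval Phi
  rw [dif_pos (by omega : 1 ≤ m + 1 ∧ m + 1 ≤ m + 1)]
  have he : (⟨m + 1 - 1, by omega⟩ : Fin (m+1)) = Fin.last m := rfl
  dsimp only
  rw [he, extPerm_last]; simp only [Fin.snoc_last]
  simp [Fin.last]

lemma desB_Phi (x : BPerm m × Bool) : desB (Phi x) = desB x.1 + (if x.2 then 1 else 0) := by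
  unfold desB
  rw [Finset.range_add_one, Finset.filter_insert]
  have hrest : (Finset.range m).filter (fun i => bval (Phi x) (i + 1) < bval (Phi x) i)
      = (Finset.range m).filter (fun i => bval x.1 (i + 1) < bval x.1 i) := by
    apply Finset.filter_congr
    intro i hi
    rw [Finset.mem_range] at hi
    rw [bval_Phi x i (by omega), bval_Phi x (i+1) (by omega)]
  have hb := bval_bounds x.1 m
  rw [bval_Phi x m (le_refl m), bval_Phi_last]
  by_cases hx : x.2
  · rw [if_pos hx, if_pos (by simp [hx]; omega)]
    rw [Finset.card_insert_of_notMem (by simp), hrest]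
    simp [hx]
  · rw [if_neg hx, if_neg (by simp [hx]; omega)]
    rw [hrest]
    simp [hx]

lemma card_filter_snoc (f : Fin m → Bool) (b : Bool) :
    (Finset.univ.filter (fun i : Fin (m+1) => Fin.snoc (α := fun _ => Bool) f b i = true)).card
      = (Finset.univ.filter (fun i : Fin m => f i = true)).card + (if b then 1 else 0) := by
  rw [Finset.card_filter, Finset.card_filter, Fin.sum_univ_castSucc]
  simp [Fin.snoc_castSucc, Fin.snoc_last]

lemma sgnB_Phi (x : BPerm m × Bool) : sgnB (Phi x) = sgnB x.1 * (if x.2 then -1 else 1) := by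
  unfold sgnB
  have h1 : (Phi x).1 = extPerm x.1.1 := rfl
  have h2 : (Phi x).2 = Fin.snoc x.1.2 x.2 := rfl
  rw [h1, h2, sign_extPerm, card_filter_snoc, pow_add]
  cases x.2 <;> simp

lemma Phi_injective : Function.Injective (Phi (m := m)) := by
  intro x y hxy
  have h1 : extPerm x.1.1 = extPerm y.1.1 := congrArg Prod.fst hxy
  have h2 : (Fin.snoc x.1.2 x.2 : Fin (m+1) → Bool) = Fin.snoc y.1.2 y.2 := congrArg Prod.snd hxy
  have hσ : x.1.1 = y.1.1 := by
    apply Equiv.ext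
    intro i
    have := congrFun (congrArg (fun (e : Perm (Fin (m+1))) => (e : Fin (m+1) → Fin (m+1))) h1) i.castSucc
    simp only [extPerm_castSucc] at this
    exact Fin.castSucc_injective m this
  have hf : x.1.2 = y.1.2 := by
    funext i
    have := congrFun h2 i.castSucc
    simpa [Fin.snoc_castSucc] using this
  have hb : x.2 = y.2 := by
    have := congrFun h2 (Fin.last m)
    simpa [Fin.snoc_last] using this
  exact Prod.ext (Prod.ext hσ hf) hb

lemma Phi_surj (p : BPerm (m+1)) (h : p.1 (Fin.last m) = Fin.last m) :
    ∃ x : BPerm m × Bool, Phi x = p := by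
  have key : ∀ i : Fin m, p.1 i.castSucc ≠ Fin.last m := by
    intro i hc
    have := p.1.injective (hc.trans h.symm)
    exact absurd this (Fin.castSucc_lt_last i).ne
  have key' : ∀ i : Fin m, p.1⁻¹ i.castSucc ≠ Fin.last m := by
    intro i hc
    have : i.castSucc = Fin.last m := by
      have := congrArg p.1 hc
      rwa [show p.1 (p.1⁻¹ i.castSucc) = i.castSucc from p.1.apply_symm_apply _, h] at this
    exact absurd this (Fin.castSucc_lt_last i).ne
  refine ⟨((⟨fun i => (p.1 i.castSucc).castPred (key i),
            fun i => (p.1⁻¹ i.castSucc).castPred (key' i), ?_, ?_⟩, fun i => p.2 i.castSucc),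
          p.2 (Fin.last m)), ?_⟩
  · intro i
    simp [Fin.castSucc_castPred]
  · intro i
    simp [Fin.castSucc_castPred]
  · unfold Phi
    refine Prod.ext ?_ ?_
    · apply Equiv.ext
      intro i
      induction i using Fin.lastCases with
      | last => simpa using h.symm
      | cast i => simp [Fin.castSucc_castPred]
    · funext i
      induction i using Fin.lastCases with
      | last => simp [Fin.snoc_last]
      | cast i => simp [Fin.snoc_castSucc]

lemma sum_Acomp (F : ℕ → ℚ) :
    ∑ p ∈ Finset.univ.filter (fun p : BPerm (m+1) => p.1 (Fin.last m) = Fin.last m),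
        (sgnB p : ℚ) * F (desB p)
      = ∑ u : BPerm m, (sgnB u : ℚ) * (F (desB u) - F (desB u + 1)) := by
  rw [← Finset.sum_bij (fun (x : BPerm m × Bool) (_ : x ∈ Finset.univ) => Phi x)
      (fun x _ => by simp [Phi, extPerm_last])
      (fun x _ y _ hxy => Phi_injective hxy)
      (fun p hp => by
        rcases Phi_surj p (by simpa using (Finset.mem_filter.mp hp).2) with ⟨x, hx⟩
        exact ⟨x, Finset.mem_univ x, hx⟩)
      (fun x _ => rfl)]
  rw [Fintype.sum_prod_type]
  apply Finset.sum_congr rfl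
  intro u _
  rw [Fintype.sum_bool]
  have ht := sgnB_Phi (u, true)
  have hf := sgnB_Phi (u, false)
  have dt := desB_Phi (u, true)
  have df := desB_Phi (u, false)
  simp only [if_true, if_false] at ht hf dt df
  rw [ht, hf, dt, df]
  push_cast
  ring_nf

noncomputable def iota (p : BPerm (m+1)) : BPerm (m+1) :=
  (p.1, Function.update p.2 (p.1⁻¹ (Fin.last m)) (! p.2 (p.1⁻¹ (Fin.last m))))

lemma bval_update {n : ℕ} (p : BPerm n) (j : Fin n) (b : Bool) (k : ℕ) (hk : k ≠ (j:ℕ)+1) :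
    bval (p.1, Function.update p.2 j b) k = bval p k := by
  unfold bval
  by_cases h : 1 ≤ k ∧ k ≤ n
  · rw [dif_pos h, dif_pos h]
    have hne : (⟨k-1, by omega⟩ : Fin n) ≠ j := by
      intro hc
      apply hk
      have : k - 1 = (j:ℕ) := congrArg Fin.val hc
      omega
    dsimp only
    simp only [Function.update_of_ne hne]
  · rw [dif_neg h, dif_neg h]

lemma bval_ne_pos (q : BPerm (m+1)) (j : Fin (m+1)) (hqj : q.1 j = Fin.last m) (k : ℕ)
    (h1 : 1 ≤ k) (h2 : k ≤ m+1) (hk : k ≠ (j:ℕ)+1) :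
    -(m:ℤ) ≤ bval q k ∧ bval q k ≤ m := by
  unfold bval
  rw [dif_pos ⟨h1, h2⟩]
  have hne : (⟨k-1, by omega⟩ : Fin (m+1)) ≠ j := by
    intro hc
    apply hk
    have : k - 1 = (j:ℕ) := congrArg Fin.val hc
    omega
  have hval : q.1 ⟨k-1, by omega⟩ ≠ Fin.last m := by
    intro hc
    exact hne (q.1.injective (hc.trans hqj.symm))
  have hlt : ((q.1 ⟨k-1, by omega⟩ : Fin (m+1)) : ℕ) < m := by
    have := Fin.is_le (q.1 ⟨k-1, by omega⟩)
    have hne' : ((q.1 ⟨k-1, by omega⟩ : Fin (m+1)) : ℕ) ≠ m := by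
      intro hc
      exact hval (Fin.ext hc)
    omega
  split <;> constructor <;> push_cast <;> omega

lemma bval_at_pos (q : BPerm (m+1)) (j : Fin (m+1)) (hqj : q.1 j = Fin.last m) :
    bval q ((j:ℕ)+1) = if q.2 j then -((m:ℤ)+1) else (m:ℤ)+1 := by
  unfold bval
  have hj := j.is_lt
  rw [dif_pos ⟨by omega, by omega⟩]
  have he : (⟨(j:ℕ)+1-1, by omega⟩ : Fin (m+1)) = j := Fin.ext (by simp)
  rw [he, hqj]
  simp [Fin.last]

lemma pairsum (q : BPerm (m+1)) (j : Fin (m+1)) (hqj : q.1 j = Fin.last m) (hjm : (j:ℕ) < m) :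
    ((if bval q ((j:ℕ)+1) < bval q (j:ℕ) then 1 else 0) : ℕ)
      + (if bval q ((j:ℕ)+1+1) < bval q ((j:ℕ)+1) then 1 else 0) = 1 := by
  have hmid := bval_at_pos q j hqj
  have hleft : -(m:ℤ) ≤ bval q (j:ℕ) ∧ bval q (j:ℕ) ≤ m := by
    rcases Nat.eq_zero_or_pos (j:ℕ) with h0 | h0
    · rw [h0]
      unfold bval
      rw [dif_neg (by omega)]
      constructor <;> omega
    · exact bval_ne_pos q j hqj _ h0 (by omega) (by omega)
  have hright : -(m:ℤ) ≤ bval q ((j:ℕ)+1+1) ∧ bval q ((j:ℕ)+1+1) ≤ m :=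
    bval_ne_pos q j hqj _ (by omega) (by omega) (by omega)
  obtain ⟨hl1, hl2⟩ := hleft
  obtain ⟨hr1, hr2⟩ := hright
  rw [hmid]
  cases hb : q.2 j <;> simp only [hb, if_true, if_false, Bool.false_eq_true] <;>
    split_ifs <;> omega

lemma desB_eq_pairs (q : BPerm (m+1)) (j : Fin (m+1)) (hqj : q.1 j = Fin.last m)
    (hjm : (j:ℕ) < m) :
    desB q = (∑ i ∈ (Finset.range (m+1)) \ {(j:ℕ), (j:ℕ)+1},
        (if bval q (i+1) < bval q i then 1 else 0)) + 1 := by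
  unfold desB
  rw [Finset.card_filter]
  rw [← Finset.sum_sdiff (show ({(j:ℕ), (j:ℕ)+1} : Finset ℕ) ⊆ Finset.range (m+1) by
        intro t ht
        simp only [Finset.mem_insert, Finset.mem_singleton] at ht
        rw [Finset.mem_range]
        omega)]
  congr 1
  rw [Finset.sum_pair (by omega : (j:ℕ) ≠ (j:ℕ)+1)]
  exact pairsum q j hqj hjm

lemma desB_iota (p : BPerm (m+1)) (hp : p.1 (Fin.last m) ≠ Fin.last m) :
    desB (iota p) = desB p := by
  set j : Fin (m+1) := p.1⁻¹ (Fin.last m) with hj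
  have hqj : p.1 j = Fin.last m := p.1.apply_symm_apply _
  have hjm : (j:ℕ) < m := by
    have hne : j ≠ Fin.last m := by
      intro hc
      rw [hc] at hqj
      exact hp hqj
    have := j.is_le
    exact lt_of_le_of_ne (by omega) (fun hc => hne (Fin.ext hc))
  have hqj' : (iota p).1 j = Fin.last m := hqj
  rw [desB_eq_pairs p j hqj hjm, desB_eq_pairs (iota p) j hqj' hjm]
  congr 1
  apply Finset.sum_congr rfl
  intro i hi
  rw [Finset.mem_sdiff, Finset.mem_insert, Finset.mem_singleton] at hi
  push_neg at hi
  have e1 : bval (iota p) i = bval p i := bval_update p j _ i (by omega)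
  have e2 : bval (iota p) (i+1) = bval p (i+1) := bval_update p j _ (i+1) (by omega)
  rw [e1, e2]

lemma neg_one_pow_update {n : ℕ} (f : Fin n → Bool) (j : Fin n) :
    ((-1:ℤ) ^ (Finset.univ.filter (fun i => Function.update f j (!f j) i = true)).card)
      = -((-1:ℤ) ^ (Finset.univ.filter (fun i => f i = true)).card) := by
  cases hfj : f j
  · simp only [Bool.not_false]
    have hset : (Finset.univ.filter (fun i => Function.update f j true i = true))
        = insert j (Finset.univ.filter (fun i => f i = true)) := by
      ext i
      by_cases hij : i = j
      · subst hij
        simp [Function.update_self, hfj]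
      · simp [Function.update_of_ne hij, hij]
    rw [hset, Finset.card_insert_of_notMem (by simp [hfj]), pow_succ]
    ring
  · simp only [Bool.not_true]
    have hset : (Finset.univ.filter (fun i => Function.update f j false i = true))
        = (Finset.univ.filter (fun i => f i = true)).erase j := by
      ext i
      by_cases hij : i = j
      · subst hij
        simp [Function.update_self, hfj]
      · simp [Function.update_of_ne hij, hij]
    have hmem : j ∈ Finset.univ.filter (fun i => f i = true) := by simp [hfj]
    have hpos : 1 ≤ (Finset.univ.filter (fun i => f i = true)).card :=
      Finset.card_pos.mpr ⟨j, hmem⟩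
    rw [hset, Finset.card_erase_of_mem hmem]
    obtain ⟨k, hk⟩ : ∃ k, (Finset.univ.filter (fun i => f i = true)).card = k + 1 :=
      ⟨_, (Nat.succ_pred_eq_of_pos hpos).symm⟩
    rw [hk]
    simp [pow_succ]

lemma sgnB_iota (p : BPerm (m+1)) : sgnB (iota p) = -sgnB p := by
  unfold sgnB iota
  dsimp only
  rw [neg_one_pow_update]
  ring

lemma iota_iota (p : BPerm (m+1)) : iota (iota p) = p := by
  unfold iota
  dsimp only
  refine Prod.ext rfl ?_
  dsimp only
  rw [Function.update_self, Bool.not_not, Function.update_idem, Function.update_eq_self]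

lemma iota_ne (p : BPerm (m+1)) : iota p ≠ p := by
  intro hc
  have := congrFun (congrArg Prod.snd hc) (p.1⁻¹ (Fin.last m))
  rw [show (iota p).2 (p.1⁻¹ (Fin.last m)) = ! p.2 (p.1⁻¹ (Fin.last m)) from
    Function.update_self _ _ _] at this
  exact Bool.not_ne_self _ this

lemma sum_A (F : ℕ → ℚ) :
    ∑ p ∈ Finset.univ.filter (fun p : BPerm (m+1) => ¬ p.1 (Fin.last m) = Fin.last m),
        (sgnB p : ℚ) * F (desB p) = 0 := by
  apply Finset.sum_involution (fun p _ => iota p)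
  · intro p hp
    rw [Finset.mem_filter] at hp
    rw [desB_iota p hp.2, sgnB_iota]
    push_cast
    ring
  · intro p _ _
    exact iota_ne p
  · intro p hp
    rw [Finset.mem_filter] at hp ⊢
    exact ⟨Finset.mem_univ _, hp.2⟩
  · intro p _
    exact iota_iota p

lemma decomp (F : ℕ → ℚ) :
    ∑ p : BPerm (m+1), (sgnB p : ℚ) * F (desB p)
      = ∑ u : BPerm m, (sgnB u : ℚ) * (F (desB u) - F (desB u + 1)) := by
  rw [← Finset.sum_filter_add_sum_filter_not Finset.univ
      (fun p : BPerm (m+1) => p.1 (Fin.last m) = Fin.last m)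
      (fun p => (sgnB p : ℚ) * F (desB p))]
  rw [sum_Acomp F, sum_A F, add_zero]

lemma key : ∀ n : ℕ, ∀ r : ℕ, r < n → ∑ p : BPerm n, (sgnB p : ℚ) * (desB p : ℚ) ^ r = 0 := by
  intro n
  induction n with
  | zero => intro r hr; omega
  | succ m ih =>
    intro r hr
    rw [decomp (fun d => (d : ℚ) ^ r)]
    have expand : ∀ u : BPerm m,
        (sgnB u : ℚ) * (((desB u : ℕ) : ℚ) ^ r - ((desB u + 1 : ℕ) : ℚ) ^ r)
          = ∑ k ∈ Finset.range r, -((r.choose k : ℚ) * ((sgnB u : ℚ) * (desB u : ℚ) ^ k)) := by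
      intro u
      have hb : ((desB u : ℚ) + 1) ^ r
          = (∑ k ∈ Finset.range r, (desB u : ℚ) ^ k * (r.choose k : ℚ)) + (desB u : ℚ) ^ r := by
        rw [add_pow, Finset.sum_range_succ]
        simp
      push_cast
      rw [hb]
      rw [show ∀ S : ℚ, (sgnB u : ℚ) * ((desB u : ℚ) ^ r - (S + (desB u : ℚ) ^ r))
        = -((sgnB u : ℚ) * S) from fun S => by ring]
      rw [Finset.mul_sum, ← Finset.sum_neg_distrib]
      apply Finset.sum_congr rfl
      intro k _
      ring
    rw [Finset.sum_congr rfl (fun u _ => expand u), Finset.sum_comm]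
    apply Finset.sum_eq_zero
    intro k hk
    rw [Finset.mem_range] at hk
    have h0 := ih k (by omega)
    rw [show (∑ u : BPerm m, -((r.choose k : ℚ) * ((sgnB u : ℚ) * (desB u : ℚ) ^ k)))
        = -((r.choose k : ℚ) * ∑ u : BPerm m, (sgnB u : ℚ) * (desB u : ℚ) ^ k) by
      rw [Finset.mul_sum, Finset.sum_neg_distrib]]
    rw [h0, mul_zero, neg_zero]

end BProof

theorem typeB_pm_eulerian_moments (n r : ℕ) (hr : 1 ≤ r) (h : r < n) :
    (∑ p ∈ Finset.univ.filter (fun p : BPerm n => sgnB p = 1), ((desB p : ℚ)) ^ r) /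
        ((Finset.univ.filter (fun p : BPerm n => sgnB p = 1)).card : ℚ)
      = (∑ p : BPerm n, ((desB p : ℚ)) ^ r) / ((Finset.univ : Finset (BPerm n)).card : ℚ) := by
  have hsgn : ∀ p : BPerm n, sgnB p = 1 ∨ sgnB p = -1 := by
    intro p
    unfold sgnB
    rcases Int.units_eq_one_or (Equiv.Perm.sign p.1) with hu | hu <;>
      rcases Nat.even_or_odd ((Finset.univ.filter (fun i => p.2 i = true)).card) with he | he
    · left; rw [hu, he.neg_one_pow]; simp
    · right; rw [hu, he.neg_one_pow]; simp
    · right; rw [hu, he.neg_one_pow]; simp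
    · left; rw [hu, he.neg_one_pow]; simp
  have split : ∀ g : BPerm n → ℚ, (∑ p : BPerm n, (sgnB p : ℚ) * g p = 0) →
      ∑ p : BPerm n, g p
        = 2 * ∑ p ∈ Finset.univ.filter (fun p : BPerm n => sgnB p = 1), g p := by
    intro g hg
    rw [← Finset.sum_filter_add_sum_filter_not Finset.univ (fun p : BPerm n => sgnB p = 1) g]
    rw [← Finset.sum_filter_add_sum_filter_not Finset.univ (fun p : BPerm n => sgnB p = 1)
        (fun p => (sgnB p : ℚ) * g p)] at hg
    have e1 : ∑ p ∈ Finset.univ.filter (fun p : BPerm n => sgnB p = 1), (sgnB p : ℚ) * g p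
        = ∑ p ∈ Finset.univ.filter (fun p : BPerm n => sgnB p = 1), g p := by
      apply Finset.sum_congr rfl
      intro p hp
      rw [Finset.mem_filter] at hp
      rw [hp.2]
      push_cast
      ring
    have e2 : ∑ p ∈ Finset.univ.filter (fun p : BPerm n => ¬ sgnB p = 1), (sgnB p : ℚ) * g p
        = -∑ p ∈ Finset.univ.filter (fun p : BPerm n => ¬ sgnB p = 1), g p := by
      rw [← Finset.sum_neg_distrib]
      apply Finset.sum_congr rfl
      intro p hp
      rw [Finset.mem_filter] at hp
      rcases hsgn p with h1 | h1
      · exact absurd h1 hp.2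
      · rw [h1]
        push_cast
        ring
    rw [e1, e2] at hg
    have : ∑ p ∈ Finset.univ.filter (fun p : BPerm n => ¬ sgnB p = 1), g p
        = ∑ p ∈ Finset.univ.filter (fun p : BPerm n => sgnB p = 1), g p := by linarith
    rw [this]
    ring
  have m1 := split (fun p => (desB p : ℚ) ^ r) (BProof.key n r h)
  have hcard : ((Finset.univ : Finset (BPerm n)).card : ℚ)
      = 2 * (((Finset.univ.filter (fun p : BPerm n => sgnB p = 1)).card : ℕ) : ℚ) := by
    have m0 := split (fun _ => (1 : ℚ)) (by
      have := BProof.key n 0 (by omega)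
      simpa using this)
    simpa using m0
  rw [m1, hcard]
  rw [mul_div_mul_left _ _ (two_ne_zero)]
end

section
/- For all integers n ≥ 1 and k ≥ 0: ∑_{w ∈ B_n, sgn_B(w)=1} C(n + k - des_B(w), n) = ((2k+1)^n + 1)/2. -/
open scoped Classical

-- basic bval lemmas
lemma bval_fin {n : ℕ} (p : BPerm n) (k : Fin n) :
    bval p ((k : ℕ) + 1)
      = if p.2 k then -(((p.1 k : ℕ) : ℤ) + 1) else ((p.1 k : ℕ) : ℤ) + 1 := by
  unfold bval
  rw [dif_pos ⟨by omega, by omega⟩]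
  exact rfl

lemma bval_zero {n : ℕ} (p : BPerm n) : bval p 0 = 0 := by simp [bval]

private lemma abs_aux (b : Bool) (x n : ℤ) (h0 : 0 ≤ x) (h : x < n) :
    |if b = true then -(x + 1) else (x + 1)| ≤ n := by
  cases b <;> simp [abs_le] <;> omega

lemma bval_abs_le {n : ℕ} (p : BPerm n) (i : ℕ) : |bval p i| ≤ n := by
  unfold bval
  split
  · exact abs_aux _ _ _ (by positivity) (by exact_mod_cast Fin.is_lt _)
  · simp

lemma desB_le {n : ℕ} (p : BPerm n) : desB p ≤ n := by
  exact le_trans (Finset.card_filter_le _ _) (by simp)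

lemma desB_eq_sum {n : ℕ} (p : BPerm n) :
    desB p = ∑ i ∈ Finset.range n, (if bval p (i + 1) < bval p i then 1 else 0) := by
  rw [desB, Finset.card_filter]

open Equiv in
/-- Insert the letter `±(n+1)` at (0-based) position `j` into `p`. -/
noncomputable def ins {n : ℕ} (p : BPerm n) (j : Fin (n + 1)) (s : Bool) : BPerm (n + 1) :=
  ( (finSuccEquiv' j).trans ((p.1.optionCongr).trans finSuccEquivLast.symm),
    fun i => ((finSuccEquiv' j) i).elim s p.2 )

lemma ins_fst_self {n : ℕ} (p : BPerm n) (j : Fin (n+1)) (s : Bool) :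
    (ins p j s).1 j = Fin.last n := by
  simp [ins, finSuccEquiv'_at]

lemma ins_fst_succAbove {n : ℕ} (p : BPerm n) (j : Fin (n+1)) (s : Bool) (k : Fin n) :
    (ins p j s).1 (j.succAbove k) = (p.1 k).castSucc := by
  simp [ins, finSuccEquiv'_succAbove]

lemma ins_snd_self {n : ℕ} (p : BPerm n) (j : Fin (n+1)) (s : Bool) :
    (ins p j s).2 j = s := by
  simp [ins, finSuccEquiv'_at]

lemma ins_snd_succAbove {n : ℕ} (p : BPerm n) (j : Fin (n+1)) (s : Bool) (k : Fin n) :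
    (ins p j s).2 (j.succAbove k) = p.2 k := by
  simp [ins, finSuccEquiv'_succAbove]

lemma bval_ins_succAbove {n : ℕ} (p : BPerm n) (j : Fin (n+1)) (s : Bool) (k : Fin n) :
    bval (ins p j s) ((j.succAbove k : ℕ) + 1) = bval p ((k : ℕ) + 1) := by
  rw [bval_fin, bval_fin, ins_snd_succAbove, ins_fst_succAbove]
  simp

lemma bval_ins_self {n : ℕ} (p : BPerm n) (j : Fin (n+1)) (s : Bool) :
    bval (ins p j s) ((j : ℕ) + 1) = if s then -((n : ℤ) + 1) else (n : ℤ) + 1 := by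
  rw [bval_fin, ins_snd_self, ins_fst_self]
  simp

lemma bval_ins_small {n : ℕ} (p : BPerm n) (j : Fin (n+1)) (s : Bool)
    {t : ℕ} (ht : t ≤ (j : ℕ)) : bval (ins p j s) t = bval p t := by
  rcases t with _ | t
  · rw [bval_zero, bval_zero]
  · have hj := j.is_le
    have htn : t < n := by omega
    have h2 : (j.succAbove ⟨t, htn⟩ : ℕ) = t := by
      rw [Fin.succAbove_of_castSucc_lt _ _ (by rw [Fin.lt_def]; simpa using by omega)]
      simp
    have h3 := bval_ins_succAbove p j s ⟨t, htn⟩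
    rw [h2] at h3
    exact h3

lemma bval_ins_big {n : ℕ} (p : BPerm n) (j : Fin (n+1)) (s : Bool)
    {t : ℕ} (h1 : (j : ℕ) + 2 ≤ t) (h2 : t ≤ n + 1) :
    bval (ins p j s) t = bval p (t - 1) := by
  have htn : t - 2 < n := by omega
  have h3 : (j.succAbove ⟨t - 2, htn⟩ : ℕ) = t - 1 := by
    rw [Fin.succAbove_of_le_castSucc _ _ (by rw [Fin.le_def]; simpa using by omega)]
    simp; omega
  have h4 := bval_ins_succAbove p j s ⟨t - 2, htn⟩
  rw [h3] at h4
  have e1 : t - 1 + 1 = t := by omega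
  have e2 : ((⟨t - 2, htn⟩ : Fin n) : ℕ) + 1 = t - 1 := by simp; omega
  rw [e1, e2] at h4
  exact h4

open Equiv in
lemma cj_eq {n : ℕ} (j : Fin (n+1)) :
    ((finSuccEquiv' j).trans finSuccEquivLast.symm : Equiv.Perm (Fin (n+1)))
      = Equiv.permCongr Fin.revPerm (Fin.cycleRange j.rev) := by
  ext x
  simp only [Equiv.trans_apply, Equiv.permCongr_apply, Fin.revPerm_apply, Fin.revPerm_symm]
  refine Fin.succAboveCases j ?_ (fun k => ?_) x
  · rw [finSuccEquiv'_at, Fin.cycleRange_of_eq rfl, Fin.rev_zero]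
    simp
  · rw [finSuccEquiv'_succAbove]
    rcases lt_or_ge (k.castSucc) j with h | h
    · rw [Fin.succAbove_of_castSucc_lt _ _ h, Fin.cycleRange_of_gt (by rwa [Fin.rev_lt_rev]),
        Fin.rev_rev]
      simp
    · rw [Fin.succAbove_of_le_castSucc _ _ h]
      rw [Fin.cycleRange_of_lt (by rw [Fin.rev_lt_rev]; exact lt_of_le_of_lt h (Fin.castSucc_lt_succ (i := k)))]
      have hlt : k.succ.rev < Fin.last n := by
        rw [Fin.lt_def, Fin.val_rev, Fin.val_last, Fin.val_succ]; omega
      rw [finSuccEquivLast_symm_some, Fin.coe_castSucc, Fin.val_rev,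
        Fin.val_add_one_of_lt hlt, Fin.val_rev, Fin.val_succ]
      omega

open Equiv in
lemma sign_cj {n : ℕ} (j : Fin (n+1)) :
    Equiv.Perm.sign ((finSuccEquiv' j).trans finSuccEquivLast.symm : Equiv.Perm (Fin (n+1)))
      = (-1) ^ (n - (j : ℕ)) := by
  rw [cj_eq, Equiv.Perm.sign_permCongr, Fin.sign_cycleRange, Fin.val_rev]
  congr 1
  omega

open Equiv in
lemma ins_fst_decomp {n : ℕ} (p : BPerm n) (j : Fin (n+1)) (s : Bool) :
    (ins p j s).1
      = (Equiv.permCongr finSuccEquivLast.symm p.1.optionCongr)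
        * ((finSuccEquiv' j).trans finSuccEquivLast.symm : Equiv.Perm (Fin (n+1))) := by
  ext x
  simp [ins, Equiv.permCongr_apply, Equiv.Perm.mul_apply]

lemma sign_ins_fst {n : ℕ} (p : BPerm n) (j : Fin (n+1)) (s : Bool) :
    Equiv.Perm.sign (ins p j s).1 = (-1) ^ (n - (j : ℕ)) * Equiv.Perm.sign p.1 := by
  rw [ins_fst_decomp, map_mul, Equiv.Perm.sign_permCongr, Equiv.optionCongr_sign, sign_cj,
    mul_comm]

lemma card_ins_snd {n : ℕ} (p : BPerm n) (j : Fin (n+1)) (s : Bool) :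
    (Finset.univ.filter fun i => (ins p j s).2 i = true).card
      = (if s then 1 else 0) + (Finset.univ.filter fun i => p.2 i = true).card := by
  rw [Finset.card_filter, Finset.card_filter, Fin.sum_univ_succAbove _ j, ins_snd_self]
  congr 1
  refine Finset.sum_congr rfl fun k _ => by rw [ins_snd_succAbove]

lemma sgnB_ins {n : ℕ} (p : BPerm n) (j : Fin (n+1)) (s : Bool) :
    sgnB (ins p j s) = (-1) ^ (n - (j : ℕ)) * (if s then -1 else 1) * sgnB p := by
  rw [sgnB, sgnB, sign_ins_fst, card_ins_snd, pow_add]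
  push_cast
  rcases s with _ | _ <;> simp <;> ring

lemma desB_ins {n : ℕ} (p : BPerm n) (j : Fin (n+1)) (s : Bool) :
    desB (ins p j s)
      = desB p + (if (j : ℕ) = n then (if s then 1 else 0)
          else (if bval p ((j : ℕ) + 1) < bval p (j : ℕ) then 0 else 1)) := by
  have hj := j.is_le
  have hb : ∀ t : ℕ, |bval p t| ≤ (n : ℤ) := fun t => bval_abs_le p t
  rcases eq_or_lt_of_le hj with hJ | hJ
  · -- (j:ℕ) = n
    rw [if_pos hJ, desB_eq_sum, desB_eq_sum, Finset.sum_range_succ]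
    have h1 : ∀ t ∈ Finset.range n, (if bval (ins p j s) (t + 1) < bval (ins p j s) t then 1 else 0)
        = (if bval p (t + 1) < bval p t then 1 else 0) := by
      intro t ht
      rw [Finset.mem_range] at ht
      rw [bval_ins_small p j s (by omega), bval_ins_small p j s (by omega)]
    rw [Finset.sum_congr rfl h1]
    congr 1
    have h2 := bval_ins_self p j s
    rw [hJ] at h2
    have h3 : bval (ins p j s) n = bval p n := bval_ins_small p j s (by omega)
    rw [h2, h3]
    have hbn := hb n
    rw [abs_le] at hbn
    rcases s with _ | _ <;> simp <;> linarith
  · -- (j:ℕ) < n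
    rw [if_neg (by omega)]
    have key1 : desB (ins p j s) = (∑ t ∈ Finset.range (j:ℕ), (if bval p (t + 1) < bval p t then 1 else 0))
        + 1
        + ∑ t ∈ Finset.Ico ((j:ℕ) + 1) n, (if bval p (t + 1) < bval p t then 1 else 0) := by
      rw [desB_eq_sum]
      rw [← Finset.sum_range_add_sum_Ico _ (show (j:ℕ) + 2 ≤ n + 1 by omega),
        Finset.sum_range_succ, Finset.sum_range_succ]
      have ha : ∀ t ∈ Finset.range (j:ℕ), (if bval (ins p j s) (t + 1) < bval (ins p j s) t then 1 else 0)
          = (if bval p (t + 1) < bval p t then (1:ℕ) else 0) := by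
        intro t ht
        rw [Finset.mem_range] at ht
        rw [bval_ins_small p j s (by omega), bval_ins_small p j s (by omega)]
      have hmid : (if bval (ins p j s) ((j:ℕ) + 1) < bval (ins p j s) (j:ℕ) then (1:ℕ) else 0)
          = (if s then 1 else 0) := by
        rw [bval_ins_self, bval_ins_small p j s (by omega)]
        have hbJ := hb (j:ℕ)
        rw [abs_le] at hbJ
        rcases s with _ | _ <;> simp <;> linarith
      have hbig := bval_ins_big p j s (t := (j:ℕ) + 1 + 1) (by omega) (by omega)
      have e : (j:ℕ) + 1 + 1 - 1 = (j:ℕ) + 1 := by omega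
      rw [e] at hbig
      have hmid2 : (if bval (ins p j s) ((j:ℕ) + 1 + 1) < bval (ins p j s) ((j:ℕ) + 1) then (1:ℕ) else 0)
          = (if s then 0 else 1) := by
        rw [bval_ins_self, hbig]
        have hbJ := hb ((j:ℕ) + 1)
        rw [abs_le] at hbJ
        rcases s with _ | _ <;> simp <;> linarith
      have hc : ∑ t ∈ Finset.Ico ((j:ℕ) + 2) (n + 1),
            (if bval (ins p j s) (t + 1) < bval (ins p j s) t then (1:ℕ) else 0)
          = ∑ t ∈ Finset.Ico ((j:ℕ) + 1) n, (if bval p (t + 1) < bval p t then 1 else 0) := by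
        rw [Finset.sum_Ico_eq_sum_range, Finset.sum_Ico_eq_sum_range]
        have hlen : n + 1 - ((j:ℕ) + 2) = n - ((j:ℕ) + 1) := by omega
        rw [hlen]
        refine Finset.sum_congr rfl fun i hi => ?_
        rw [Finset.mem_range] at hi
        rw [bval_ins_big p j s (by omega) (by omega), bval_ins_big p j s (by omega) (by omega)]
        have e1 : (j:ℕ) + 2 + i + 1 - 1 = (j:ℕ) + 1 + i + 1 := by omega
        have e2 : (j:ℕ) + 2 + i - 1 = (j:ℕ) + 1 + i := by omega
        rw [e1, e2]
      rw [Finset.sum_congr rfl ha, hmid, hmid2, hc]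
      have hs1 : ((if s then (1:ℕ) else 0) + (if s then 0 else 1)) = 1 := by
        rcases s with _ | _ <;> simp
      ring_nf
      omega
    have key2 : desB p = (∑ t ∈ Finset.range (j:ℕ), (if bval p (t + 1) < bval p t then 1 else 0))
        + (if bval p ((j:ℕ) + 1) < bval p (j:ℕ) then 1 else 0)
        + ∑ t ∈ Finset.Ico ((j:ℕ) + 1) n, (if bval p (t + 1) < bval p t then 1 else 0) := by
      rw [desB_eq_sum, ← Finset.sum_range_add_sum_Ico _ (show (j:ℕ) + 1 ≤ n by omega),
        Finset.sum_range_succ]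
    rcases lt_or_ge (bval p ((j:ℕ) + 1)) (bval p (j:ℕ)) with hd | hd
    · rw [if_pos hd] at key2
      rw [if_pos hd]
      omega
    · rw [if_neg (not_lt.mpr hd)] at key2
      rw [if_neg (not_lt.mpr hd)]
      omega

lemma ins_injective {n : ℕ} :
    Function.Injective (fun x : BPerm n × Fin (n + 1) × Bool => ins x.1 x.2.1 x.2.2) := by
  rintro ⟨p, j, s⟩ ⟨p', j', s'⟩ h
  simp only at h
  have hj : j = j' := by
    have h1 : (ins p j s).1 j = Fin.last n := ins_fst_self p j s
    have h2 : (ins p j s).1 j' = Fin.last n := by rw [h]; exact ins_fst_self p' j' s'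
    exact (ins p j s).1.injective (h1.trans h2.symm)
  subst hj
  have hs : s = s' := by
    have h1 : (ins p j s).2 j = s := ins_snd_self p j s
    have h2 : (ins p j s).2 j = s' := by rw [h]; exact ins_snd_self p' j s'
    exact h1.symm.trans h2
  subst hs
  have hp1 : p.1 = p'.1 := by
    ext k
    have h1 : (ins p j s).1 (j.succAbove k) = (p.1 k).castSucc := ins_fst_succAbove p j s k
    have h2 : (ins p j s).1 (j.succAbove k) = (p'.1 k).castSucc := by
      rw [h]; exact ins_fst_succAbove p' j s k
    have := h1.symm.trans h2
    exact Fin.val_eq_of_eq (Fin.castSucc_injective _ this)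
  have hp2 : p.2 = p'.2 := by
    funext k
    have h1 : (ins p j s).2 (j.succAbove k) = p.2 k := ins_snd_succAbove p j s k
    have h2 : (ins p j s).2 (j.succAbove k) = p'.2 k := by
      rw [h]; exact ins_snd_succAbove p' j s k
    exact h1.symm.trans h2
  have : p = p' := Prod.ext hp1 hp2
  rw [this]

lemma ins_bijective {n : ℕ} :
    Function.Bijective (fun x : BPerm n × Fin (n + 1) × Bool => ins x.1 x.2.1 x.2.2) := by
  rw [Fintype.bijective_iff_injective_and_card]
  refine ⟨ins_injective, ?_⟩
  simp [Fintype.card_perm, Nat.factorial_succ, pow_succ]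
  ring

lemma choose_key (n k d : ℕ) (hd : d ≤ n) :
    (2 * d + 1) * Nat.choose (n + k - d + 1) (n + 1)
      + (2 * (n - d) + 1) * Nat.choose (n + k - d) (n + 1)
      = (2 * k + 1) * Nat.choose (n + k - d) n := by
  rcases le_or_gt d k with hdk | hdk
  · obtain ⟨e, rfl⟩ : ∃ e, k = d + e := ⟨k - d, by omega⟩
    obtain ⟨m, rfl⟩ : ∃ m, n = d + m := ⟨n - d, by omega⟩
    have e1 : d + m + (d + e) - d = d + m + e := by omega
    have e2 : d + m - d = m := by omega
    rw [e1, e2]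
    have h1 : Nat.choose (d + m + e + 1) (d + m + 1)
        = Nat.choose (d + m + e) (d + m) + Nat.choose (d + m + e) (d + m + 1) :=
      Nat.choose_succ_succ _ _
    have h2 : Nat.choose (d + m + e) (d + m + 1) * (d + m + 1)
        = Nat.choose (d + m + e) (d + m) * (d + m + e - (d + m)) :=
      Nat.choose_succ_right_eq _ _
    have e3 : d + m + e - (d + m) = e := by omega
    rw [e3] at h2
    zify at h1 h2 ⊢
    rw [h1]
    linear_combination 2 * h2
  · have h0 : n + k - d < n := by omega
    rw [Nat.choose_eq_zero_of_lt (by omega), Nat.choose_eq_zero_of_lt (by omega),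
      Nat.choose_eq_zero_of_lt h0]
    simp

lemma desB_card_fin {n : ℕ} (p : BPerm n) :
    (Finset.univ.filter fun i : Fin n => bval p ((i : ℕ) + 1) < bval p (i : ℕ)).card = desB p := by
  rw [desB, Finset.card_filter, Finset.card_filter, ← Fin.sum_univ_eq_sum_range]

lemma bperm_zero_card : Fintype.card (BPerm 0) = 1 := by
  simp

lemma sgnB_zero (p : BPerm 0) : sgnB p = 1 := by
  have h1 : p.1 = 1 := by ext x; exact x.elim0
  have h2 : (Finset.univ.filter fun i => p.2 i = true) = ∅ := by
    apply Finset.eq_empty_of_forall_notMem; intro x; exact Fin.elim0 x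
  rw [sgnB, h1, h2]
  simp

lemma desB_zero (p : BPerm 0) : desB p = 0 := by
  simp [desB]

lemma inner_T {n k : ℕ} (p : BPerm n) :
    ∑ j : Fin (n + 1), ∑ s : Bool,
        (Nat.choose (n + 1 + k - desB (ins p j s)) (n + 1) : ℚ)
      = (2 * (k : ℚ) + 1) * Nat.choose (n + k - desB p) n := by
  have hd : desB p ≤ n := desB_le p
  have e0 : n + 1 + k - (desB p + 0) = n + k - desB p + 1 := by omega
  have e1 : n + 1 + k - (desB p + 1) = n + k - desB p := by omega
  rw [Fin.sum_univ_castSucc]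
  have e0' : n + 1 + k - desB p = n + k - desB p + 1 := by omega
  have hlast : ∑ s : Bool, (Nat.choose (n + 1 + k - desB (ins p (Fin.last n) s)) (n + 1) : ℚ)
      = Nat.choose (n + k - desB p) (n + 1) + Nat.choose (n + k - desB p + 1) (n + 1) := by
    rw [Fintype.sum_bool, desB_ins, desB_ins]
    simp only [Fin.val_last, if_pos rfl]
    norm_num
    rw [e1, e0']
  have hcast : ∀ i : Fin n,
      ∑ s : Bool, (Nat.choose (n + 1 + k - desB (ins p i.castSucc s)) (n + 1) : ℚ)
      = 2 * (if bval p ((i : ℕ) + 1) < bval p (i : ℕ)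
          then (Nat.choose (n + k - desB p + 1) (n + 1) : ℚ)
          else (Nat.choose (n + k - desB p) (n + 1) : ℚ)) := by
    intro i
    have hne : ((i : ℕ)) ≠ n := by omega
    rw [Fintype.sum_bool, desB_ins, desB_ins]
    simp only [Fin.coe_castSucc, if_neg hne]
    rcases lt_or_ge (bval p ((i : ℕ) + 1)) (bval p (i : ℕ)) with h | h
    · simp only [if_pos h, Nat.add_zero]
      rw [e0']
      ring
    · simp only [if_neg (not_lt.mpr h), e1]
      ring
  rw [Finset.sum_congr rfl (fun i _ => hcast i), hlast]
  rw [← Finset.mul_sum, Finset.sum_ite, Finset.sum_const, Finset.sum_const]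
  rw [desB_card_fin]
  have hcardnot : (Finset.univ.filter fun i : Fin n =>
      ¬ bval p ((i : ℕ) + 1) < bval p (i : ℕ)).card = n - desB p := by
    have := Finset.card_filter_add_card_filter_not (s := (Finset.univ : Finset (Fin n)))
      (p := fun i : Fin n => bval p ((i : ℕ) + 1) < bval p (i : ℕ))
    rw [desB_card_fin] at this
    simp only [Finset.card_univ, Fintype.card_fin] at this
    omega
  rw [hcardnot]
  have hkey := choose_key n k (desB p) hd
  have hc : ((2 * desB p + 1) * Nat.choose (n + k - desB p + 1) (n + 1)
      + (2 * (n - desB p) + 1) * Nat.choose (n + k - desB p) (n + 1) : ℚ)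
      = (2 * k + 1) * Nat.choose (n + k - desB p) n := by exact_mod_cast congrArg (Nat.cast : ℕ → ℚ) hkey
  simp only [nsmul_eq_mul]
  push_cast [Nat.cast_sub hd] at hc ⊢
  linarith [hc]

lemma inner_S {n k : ℕ} (p : BPerm n) :
    ∑ j : Fin (n + 1), ∑ s : Bool,
        ((sgnB (ins p j s) : ℚ) * Nat.choose (n + 1 + k - desB (ins p j s)) (n + 1))
      = (sgnB p : ℚ) * Nat.choose (n + k - desB p) n := by
  have hd : desB p ≤ n := desB_le p
  have e0' : n + 1 + k - desB p = n + k - desB p + 1 := by omega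
  have e1 : n + 1 + k - (desB p + 1) = n + k - desB p := by omega
  rw [Fin.sum_univ_castSucc]
  have hcast : ∀ i : Fin n,
      ∑ s : Bool, ((sgnB (ins p i.castSucc s) : ℚ)
          * Nat.choose (n + 1 + k - desB (ins p i.castSucc s)) (n + 1)) = 0 := by
    intro i
    have hne : ((i : ℕ)) ≠ n := by omega
    rw [Fintype.sum_bool, desB_ins, desB_ins, sgnB_ins, sgnB_ins]
    simp only [Fin.coe_castSucc, if_neg hne, if_true, if_false]
    push_cast
    ring
  rw [Finset.sum_congr rfl (fun i _ => hcast i), Finset.sum_const, smul_zero, zero_add]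
  rw [Fintype.sum_bool, desB_ins, desB_ins, sgnB_ins, sgnB_ins]
  simp only [Fin.val_last, if_pos rfl, Nat.sub_self, pow_zero, one_mul, if_true, if_false]
  have hpas : (Nat.choose (n + k - desB p + 1) (n + 1) : ℚ)
      = Nat.choose (n + k - desB p) n + Nat.choose (n + k - desB p) (n + 1) := by
    exact_mod_cast congrArg (Nat.cast : ℕ → ℚ) (Nat.choose_succ_succ (n + k - desB p) n)
  norm_num
  rw [e1, e0', hpas]
  ring

lemma Tsum (n k : ℕ) :
    ∑ p : BPerm n, (Nat.choose (n + k - desB p) n : ℚ) = (2 * (k : ℚ) + 1) ^ n := by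
  induction n with
  | zero =>
    rw [pow_zero]
    have h : ∀ p : BPerm 0, (Nat.choose (0 + k - desB p) 0 : ℚ) = 1 := by
      intro p; rw [desB_zero, Nat.choose_zero_right]; norm_num
    rw [Finset.sum_congr rfl (fun p _ => h p), Finset.sum_const, Finset.card_univ,
      bperm_zero_card]
    norm_num
  | succ n ih =>
    have hbij := Fintype.sum_bijective _ (ins_bijective (n := n))
      (fun x : BPerm n × Fin (n + 1) × Bool =>
        (Nat.choose (n + 1 + k - desB (ins x.1 x.2.1 x.2.2)) (n + 1) : ℚ))
      (fun q : BPerm (n + 1) => (Nat.choose (n + 1 + k - desB q) (n + 1) : ℚ))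
      (fun x => rfl)
    rw [← hbij, Fintype.sum_prod_type]
    have hinner : ∀ p : BPerm n,
        (∑ y : Fin (n + 1) × Bool,
          (Nat.choose (n + 1 + k - desB (ins p y.1 y.2)) (n + 1) : ℚ))
        = (2 * (k : ℚ) + 1) * Nat.choose (n + k - desB p) n := by
      intro p
      rw [Fintype.sum_prod_type]
      exact inner_T p
    rw [Finset.sum_congr rfl (fun p _ => hinner p), ← Finset.mul_sum, ih, pow_succ]
    ring

lemma Ssum (n k : ℕ) :
    ∑ p : BPerm n, (sgnB p : ℚ) * Nat.choose (n + k - desB p) n = 1 := by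
  induction n with
  | zero =>
    have h : ∀ p : BPerm 0, (sgnB p : ℚ) * Nat.choose (0 + k - desB p) 0 = 1 := by
      intro p; rw [desB_zero, sgnB_zero, Nat.choose_zero_right]; norm_num
    rw [Finset.sum_congr rfl (fun p _ => h p), Finset.sum_const, Finset.card_univ,
      bperm_zero_card]
    norm_num
  | succ n ih =>
    have hbij := Fintype.sum_bijective _ (ins_bijective (n := n))
      (fun x : BPerm n × Fin (n + 1) × Bool =>
        (sgnB (ins x.1 x.2.1 x.2.2) : ℚ)
          * Nat.choose (n + 1 + k - desB (ins x.1 x.2.1 x.2.2)) (n + 1))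
      (fun q : BPerm (n + 1) => (sgnB q : ℚ) * Nat.choose (n + 1 + k - desB q) (n + 1))
      (fun x => rfl)
    rw [← hbij, Fintype.sum_prod_type]
    have hinner : ∀ p : BPerm n,
        (∑ y : Fin (n + 1) × Bool,
          (sgnB (ins p y.1 y.2) : ℚ) * Nat.choose (n + 1 + k - desB (ins p y.1 y.2)) (n + 1))
        = (sgnB p : ℚ) * Nat.choose (n + k - desB p) n := by
      intro p
      rw [Fintype.sum_prod_type]
      exact inner_S p
    rw [Finset.sum_congr rfl (fun p _ => hinner p), ih]

lemma sgnB_eq_one_or {n : ℕ} (p : BPerm n) : sgnB p = 1 ∨ sgnB p = -1 := by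
  rw [sgnB]
  rcases Int.units_eq_one_or (Equiv.Perm.sign p.1) with h | h <;> rw [h] <;>
    rcases Nat.even_or_odd ((Finset.univ.filter (fun i => p.2 i = true)).card) with he | he <;>
      simp [he.neg_one_pow]

theorem typeB_binomial_sum (n k : ℕ) (hn : 1 ≤ n) :
    (∑ p ∈ Finset.univ.filter (fun p : BPerm n => sgnB p = 1),
        (Nat.choose (n + k - desB p) n : ℚ))
      = ((2 * (k : ℚ) + 1) ^ n + 1) / 2 := by
  rw [Finset.sum_filter]
  have hpt : ∀ p : BPerm n,
      (if sgnB p = 1 then (Nat.choose (n + k - desB p) n : ℚ) else 0)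
        = (1 / 2) * (Nat.choose (n + k - desB p) n : ℚ)
          + (1 / 2) * ((sgnB p : ℚ) * Nat.choose (n + k - desB p) n) := by
    intro p
    rcases sgnB_eq_one_or p with h | h <;> rw [h]
    · rw [if_pos rfl]; push_cast; ring
    · rw [if_neg (by norm_num)]; push_cast; ring
  rw [Finset.sum_congr rfl (fun p _ => hpt p), Finset.sum_add_distrib,
    ← Finset.mul_sum, ← Finset.mul_sum, Tsum, Ssum]
  ring
end

section
/- For any k ≥ 1, the formal power series identity ∏_{j ≥ 1} (1 - u^j/k^j)^{-f_{j,k}} = 1/(1-u) holds, where f_{j,k} = (1/j) ∑_{d | j} μ(d) k^{j/d} and μ is the Möbius function. -/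
open scoped Classical

/-- `f_{j,k} = (1/j) ∑_{d ∣ j} μ(d) k^{j/d}`, the number of primitive necklaces of
length `j` on `k` letters (an integer division that is exact for `j ≥ 1`). -/
noncomputable def necklaceCount (j k : ℕ) : ℤ :=
  (∑ d ∈ Nat.divisors j, (ArithmeticFunction.moebius d) * (k : ℤ) ^ (j / d)) / j

open Finset ArithmeticFunction
open scoped ArithmeticFunction.Moebius

/-- The numerator `∑_{d ∣ n} μ(d) k^{n/d}`. -/
noncomputable def neckF (n k : ℕ) : ℤ :=
  ∑ d ∈ Nat.divisors n, (μ d : ℤ) * (k : ℤ) ^ (n / d)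

lemma fermat_int (p : ℕ) (hp : p.Prime) (c : ℤ) : (p : ℤ) ∣ c ^ p - c := by
  haveI : Fact p.Prime := ⟨hp⟩
  rw [← ZMod.intCast_zmod_eq_zero_iff_dvd]
  push_cast
  rw [ZMod.pow_card]
  ring

lemma ppow_dvd (p : ℕ) (hp : p.Prime) (a : ℕ) (ha : 1 ≤ a) (c : ℤ) :
    (p : ℤ) ^ a ∣ c ^ p ^ a - c ^ p ^ (a - 1) := by
  have h := dvd_sub_pow_of_dvd_sub (fermat_int p hp c) (a - 1)
  rwa [← pow_mul, ← pow_succ', Nat.sub_add_cancel ha] at h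

lemma ppow_dvd_neckF (n k : ℕ) (hn : n ≠ 0) (p : ℕ) (hp : p.Prime) :
    (p : ℤ) ^ (n.factorization p) ∣ neckF n k := by
  set a := n.factorization p with ha
  rcases Nat.eq_zero_or_pos a with h0 | hpos
  · simp [h0]
  have hpn : p ∣ n := Nat.dvd_of_factorization_pos (by omega)
  have hpan : p ^ a ∣ n := Nat.ordProj_dvd n p
  set K : ℤ := (k : ℤ)
  set S := n.divisors.filter (fun d => ¬ p ∣ d) with hS
  have step2 : ∑ d ∈ n.divisors.filter (fun d => p ∣ d), (μ d : ℤ) * K ^ (n / d)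
      = ∑ e ∈ S, (μ (p * e) : ℤ) * K ^ (n / (p * e)) := by
    apply Finset.sum_bij_ne_zero (fun d _ _ => d / p)
    · intro d hd hne
      simp only [Finset.mem_filter, Nat.mem_divisors] at hd
      obtain ⟨⟨hdn, -⟩, hpd⟩ := hd
      have hsq : Squarefree d := by
        rcases eq_or_ne (μ d) 0 with h | h
        · simp [h] at hne
        · exact moebius_ne_zero_iff_squarefree.mp h
      have hdp : d / p ∣ d := ⟨p, (Nat.div_mul_cancel hpd).symm⟩
      simp only [hS, Finset.mem_filter, Nat.mem_divisors]
      refine ⟨⟨hdp.trans hdn, hn⟩, fun hcon => ?_⟩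
      have : p * p ∣ d := by
        have := Nat.mul_dvd_mul_left p hcon
        rwa [Nat.mul_div_cancel' hpd] at this
      exact hp.not_isUnit (hsq p this)
    · intro d₁ h₁ h₁' d₂ h₂ h₂' heq
      simp only [Finset.mem_filter] at h₁ h₂
      have e1 := Nat.div_mul_cancel h₁.2
      have e2 := Nat.div_mul_cancel h₂.2
      rw [← e1, ← e2, heq]
    · intro e he hge
      simp only [hS, Finset.mem_filter, Nat.mem_divisors] at he
      obtain ⟨⟨hen, -⟩, hpe⟩ := he
      have hcop : Nat.Coprime p e := (Nat.Prime.coprime_iff_not_dvd hp).mpr hpe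
      have hpen : p * e ∣ n := Nat.Coprime.mul_dvd_of_dvd_of_dvd hcop hpn hen
      refine ⟨p * e, ?_, ?_, ?_⟩
      · simp only [Finset.mem_filter, Nat.mem_divisors]
        exact ⟨⟨hpen, hn⟩, Dvd.intro e rfl⟩
      · exact hge
      · rw [Nat.mul_div_cancel_left e hp.pos]
    · intro d hd hne
      simp only [Finset.mem_filter] at hd
      rw [Nat.mul_div_cancel' hd.2]
  have split : neckF n k = ∑ e ∈ S, ((μ e : ℤ) * K ^ (n / e) + (μ (p * e) : ℤ) * K ^ (n / (p * e))) := by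
    rw [Finset.sum_add_distrib, ← step2, neckF, hS]
    rw [← Finset.sum_filter_add_sum_filter_not n.divisors (fun d => ¬ p ∣ d)]
    simp only [not_not]
    rfl
  rw [split]
  apply Finset.dvd_sum
  intro e he
  simp only [hS, Finset.mem_filter, Nat.mem_divisors] at he
  obtain ⟨⟨hen, -⟩, hpe⟩ := he
  have hcop : Nat.Coprime p e := (Nat.Prime.coprime_iff_not_dvd hp).mpr hpe
  have hmu : (μ (p * e) : ℤ) = -(μ e) := by
    rw [isMultiplicative_moebius.map_mul_of_coprime hcop, moebius_apply_prime hp]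
    ring
  rw [hmu]
  have hterm : (μ e : ℤ) * K ^ (n / e) + -(μ e) * K ^ (n / (p * e))
      = (μ e : ℤ) * (K ^ (n / e) - K ^ (n / (p * e))) := by ring
  rw [hterm]
  apply Dvd.dvd.mul_left
  -- p^a ∣ K^(n/e) - K^(n/(p*e))
  have hne' : n / (p * e) = (n / e) / p := by
    rw [Nat.div_div_eq_div_mul, Nat.mul_comm]
  set t := n / e with htdef
  have hpat : p ^ a ∣ t := by
    have hcop' : Nat.Coprime (p ^ a) e := Nat.Coprime.pow_left a hcop
    have : p ^ a ∣ e * t := by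
      rw [htdef, Nat.mul_div_cancel' hen]; exact hpan
    exact (Nat.Coprime.dvd_of_dvd_mul_left hcop' this)
  obtain ⟨s, hs⟩ := hpat
  have h1 : K ^ t = (K ^ s) ^ p ^ a := by rw [hs, mul_comm, pow_mul]
  have h2 : K ^ (t / p) = (K ^ s) ^ p ^ (a - 1) := by
    have : t / p = p ^ (a - 1) * s := by
      rw [hs]
      rcases Nat.exists_eq_add_of_le hpos with ⟨b, hb⟩
      have : p ^ a = p * p ^ (a - 1) := by
        rw [← pow_succ']
        congr 1
        omega
      rw [this, Nat.mul_assoc, Nat.mul_div_cancel_left _ hp.pos]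
    rw [this, mul_comm, pow_mul]
  rw [hne', h1, h2]
  exact ppow_dvd p hp a hpos (K ^ s)

lemma dvd_neckF (n k : ℕ) (hn : n ≠ 0) : (n : ℤ) ∣ neckF n k := by
  rw [Int.natCast_dvd]
  rw [Nat.dvd_iff_prime_pow_dvd_dvd]
  intro p m hp hdvd
  have hm : m ≤ n.factorization p := (Nat.Prime.pow_dvd_iff_le_factorization hp hn).mp hdvd
  have h1 : (p : ℤ) ^ (n.factorization p) ∣ neckF n k := ppow_dvd_neckF n k hn p hp
  have h2 : p ^ m ∣ p ^ (n.factorization p) := pow_dvd_pow p hm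
  have := (Int.natCast_dvd).mp (by exact_mod_cast h1.trans (dvd_refl _))
  calc p ^ m ∣ p ^ (n.factorization p) := h2
    _ ∣ (neckF n k).natAbs := by
        rwa [← Int.natCast_dvd, Nat.cast_pow]


lemma neckF_eq (j k : ℕ) : neckF j k = ∑ d ∈ Nat.divisors j, (μ d : ℤ) * (k : ℤ) ^ (j / d) := rfl

lemma mul_necklaceCount (j k : ℕ) (hj : j ≠ 0) :
    (j : ℤ) * necklaceCount j k = neckF j k := by
  rw [necklaceCount, ← neckF_eq, mul_comm, Int.ediv_mul_cancel (dvd_neckF j k hj)]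

lemma gauss_sum (n k : ℕ) (hn : 0 < n) :
    ∑ j ∈ Nat.divisors n, (j : ℤ) * necklaceCount j k = (k : ℤ) ^ n := by
  have key : ∀ m > 0,
      ∑ j ∈ Nat.divisors m, neckF j k = (k : ℤ) ^ m := by
    rw [ArithmeticFunction.sum_eq_iff_sum_smul_moebius_eq (f := fun j => neckF j k)
      (g := fun m => (k : ℤ) ^ m)]
    intro m hm
    rw [Nat.sum_divisorsAntidiagonal (fun d e => (μ d : ℤ) • (k : ℤ) ^ e)]
    simp [neckF, smul_eq_mul]
  rw [Finset.sum_congr rfl (fun j hj => mul_necklaceCount j k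
    (Nat.pos_of_mem_divisors hj).ne'), key n hn]

lemma moebius_bounds (d : ℕ) : -1 ≤ (μ d : ℤ) ∧ (μ d : ℤ) ≤ 1 := by
  by_cases h : Squarefree d
  · rw [moebius_apply_of_squarefree h]
    rcases Nat.even_or_odd (cardFactors d) with he | ho
    · rw [he.neg_one_pow]; omega
    · rw [ho.neg_one_pow]; omega
  · rw [moebius_eq_zero_of_not_squarefree h]; omega

lemma geom_bound (k : ℕ) (hk : 2 ≤ k) (M : ℕ) :
    ∑ m ∈ Finset.Icc 1 M, (k : ℤ) ^ m ≤ (k : ℤ) ^ (M + 1) - 1 := by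
  induction M with
  | zero => simp; omega
  | succ M ih =>
    rw [Finset.sum_Icc_succ_top (by omega)]
    have h1 : (k : ℤ) ^ (M + 1) + (k : ℤ) ^ (M + 1) ≤ (k : ℤ) ^ (M + 2) := by
      have : (2 : ℤ) * (k : ℤ) ^ (M + 1) ≤ (k : ℤ) * (k : ℤ) ^ (M + 1) := by
        apply mul_le_mul_of_nonneg_right (by exact_mod_cast hk) (by positivity)
      calc (k : ℤ) ^ (M + 1) + (k : ℤ) ^ (M + 1) = 2 * (k : ℤ) ^ (M + 1) := by ring
        _ ≤ (k : ℤ) * (k : ℤ) ^ (M + 1) := this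
        _ = (k : ℤ) ^ (M + 2) := by ring
    have h2 : (k : ℤ) ^ (M + 1 + 1) = (k : ℤ) ^ (M + 2) := by ring
    omega

lemma neckF_nonneg (j k : ℕ) (hj : 1 ≤ j) (hk : 1 ≤ k) : 0 ≤ neckF j k := by
  rcases eq_or_lt_of_le hk with hk1 | hk2
  · -- k = 1
    have : neckF j 1 = ∑ d ∈ Nat.divisors j, (μ d : ℤ) := by
      simp [neckF]
    rw [← hk1, this, ← ArithmeticFunction.coe_mul_zeta_apply,
      ArithmeticFunction.moebius_mul_coe_zeta]
    rcases eq_or_ne j 1 with h | h <;> simp [h]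
  · -- k ≥ 2
    have hk2' : 2 ≤ k := hk2
    rcases eq_or_lt_of_le hj with hj1 | hj2
    · rw [neckF, ← hj1]; simp
    · have hj2' : 2 ≤ j := hj2
      have hjne : j ≠ 0 := by omega
      have h1mem : 1 ∈ Nat.divisors j := Nat.one_mem_divisors.mpr hjne
      rw [neckF, ← Finset.add_sum_erase _ _ h1mem]
      simp only [ArithmeticFunction.moebius_apply_one, Nat.div_one, one_mul]
      set E := (Nat.divisors j).erase 1 with hE
      have hbound : ∀ d ∈ E, -((k : ℤ) ^ (j / d)) ≤ (μ d : ℤ) * (k : ℤ) ^ (j / d) := by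
        intro d hd
        have := (moebius_bounds d).1
        nlinarith [pow_pos (show (0:ℤ) < k by exact_mod_cast hk) (j / d)]
      have hsum1 : -(∑ d ∈ E, (k : ℤ) ^ (j / d)) ≤ ∑ d ∈ E, (μ d : ℤ) * (k : ℤ) ^ (j / d) := by
        rw [← Finset.sum_neg_distrib]
        exact Finset.sum_le_sum hbound
      have himg : ∑ d ∈ E, (k : ℤ) ^ (j / d) = ∑ m ∈ E.image (fun d => j / d), (k : ℤ) ^ m := by
        rw [Finset.sum_image]
        intro d₁ h₁ d₂ h₂ heq
        simp only [hE, Finset.mem_coe, Finset.mem_erase, Nat.mem_divisors] at h₁ h₂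
        have e1 : j / (j / d₁) = d₁ := Nat.div_div_self h₁.2.1 hjne
        have e2 : j / (j / d₂) = d₂ := Nat.div_div_self h₂.2.1 hjne
        rw [← e1, ← e2]; exact congrArg (j / ·) heq
      have hsub : E.image (fun d => j / d) ⊆ Finset.Icc 1 (j / 2) := by
        intro m hm
        simp only [Finset.mem_image] at hm
        obtain ⟨d, hd, rfl⟩ := hm
        simp only [hE, Finset.mem_erase, Nat.mem_divisors] at hd
        have hd2 : 2 ≤ d := by
          have := Nat.pos_of_dvd_of_pos hd.2.1 (by omega)
          omega
        have hdj : d ≤ j := Nat.le_of_dvd (by omega) hd.2.1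
        simp only [Finset.mem_Icc]
        constructor
        · exact Nat.one_le_div_iff (by omega) |>.mpr hdj
        · exact Nat.div_le_div_left hd2 (by omega)
      have hsum2 : ∑ m ∈ E.image (fun d => j / d), (k : ℤ) ^ m
          ≤ ∑ m ∈ Finset.Icc 1 (j / 2), (k : ℤ) ^ m := by
        apply Finset.sum_le_sum_of_subset_of_nonneg hsub
        intro m _ _
        positivity
      have hgeo := geom_bound k hk2' (j / 2)
      have hpow : (k : ℤ) ^ (j / 2 + 1) ≤ (k : ℤ) ^ j := by
        apply pow_le_pow_right₀ (by exact_mod_cast hk)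
        omega
      omega

lemma necklaceCount_nonneg (j k : ℕ) (hj : 1 ≤ j) (hk : 1 ≤ k) :
    0 ≤ necklaceCount j k :=
  Int.ediv_nonneg (neckF_nonneg j k hj hk) (by positivity)

lemma gauss_toNat (n k : ℕ) (hn : 0 < n) (hk : 1 ≤ k) :
    ∑ j ∈ Nat.divisors n, (j : ℚ) * (((necklaceCount j k).toNat : ℕ) : ℚ) = (k : ℚ) ^ n := by
  have h := gauss_sum n k hn
  have : ∀ j ∈ Nat.divisors n, (j : ℤ) * (((necklaceCount j k).toNat : ℕ) : ℤ)
      = (j : ℤ) * necklaceCount j k := by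
    intro j hj
    rw [Int.toNat_of_nonneg (necklaceCount_nonneg j k
      (Nat.pos_of_mem_divisors hj) hk)]
  calc ∑ j ∈ Nat.divisors n, (j : ℚ) * (((necklaceCount j k).toNat : ℕ) : ℚ)
      = ((∑ j ∈ Nat.divisors n, (j : ℤ) * (((necklaceCount j k).toNat : ℕ) : ℤ) : ℤ) : ℚ) := by
        push_cast; ring_nf
    _ = (((k : ℤ) ^ n : ℤ) : ℚ) := by rw [Finset.sum_congr rfl this, h]
    _ = (k : ℚ) ^ n := by push_cast; ring

open PowerSeries Finset
open scoped PowerSeries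

lemma ode_unique (h g : PowerSeries ℚ) (M : ℕ)
    (h0 : PowerSeries.constantCoeff h = 0)
    (g0 : PowerSeries.constantCoeff g = 1)
    (hd : (PowerSeries.X : PowerSeries ℚ) ^ M ∣
      (PowerSeries.derivative ℚ h) * g - h * (PowerSeries.derivative ℚ g)) :
    (PowerSeries.X : PowerSeries ℚ) ^ (M + 1) ∣ h := by
  rw [PowerSeries.X_pow_dvd_iff] at hd ⊢
  suffices H : ∀ n, n < M + 1 → PowerSeries.coeff n h = 0 from H
  intro n
  induction n using Nat.strong_induction_on with
  | _ n ih =>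
    intro hn
    match n with
    | 0 => simpa using h0
    | (m + 1) =>
      have hm : m < M := by omega
      have hc := hd m hm
      rw [map_sub, PowerSeries.coeff_mul, PowerSeries.coeff_mul] at hc
      have e1 : ∑ p ∈ Finset.HasAntidiagonal.antidiagonal m,
          PowerSeries.coeff p.1 (PowerSeries.derivative ℚ h) * PowerSeries.coeff p.2 g
          = PowerSeries.coeff (m + 1) h * (m + 1) := by
        rw [Finset.sum_eq_single (m, 0)]
        · rw [PowerSeries.coeff_derivative, PowerSeries.coeff_zero_eq_constantCoeff, g0,
            mul_one]
        · intro p hp hne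
          rw [Finset.HasAntidiagonal.mem_antidiagonal] at hp
          have hp1 : p.1 < m := by
            rcases Nat.lt_or_ge p.1 m with h | h
            · exact h
            · exfalso
              have : p.1 = m := by omega
              have : p = (m, 0) := by
                ext
                · exact this
                · omega
              exact hne this
          rw [PowerSeries.coeff_derivative, ih (p.1 + 1) (by omega) (by omega), zero_mul,
            zero_mul]
        · intro hmem
          exact absurd (Finset.HasAntidiagonal.mem_antidiagonal.mpr (by simp)) hmem
      have e2 : ∑ p ∈ Finset.HasAntidiagonal.antidiagonal m,
          PowerSeries.coeff p.1 h * PowerSeries.coeff p.2 (PowerSeries.derivative ℚ g)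
          = 0 := by
        apply Finset.sum_eq_zero
        intro p hp
        rw [Finset.HasAntidiagonal.mem_antidiagonal] at hp
        rw [ih p.1 (by omega) (by omega), zero_mul]
      rw [e1, e2, sub_zero] at hc
      have hne : ((m : ℚ) + 1) ≠ 0 := by positivity
      rcases mul_eq_zero.mp hc with h' | h'
      · exact h'
      · exact absurd h' hne

lemma derivative_finset_prod (s : Finset ℕ) (f : ℕ → PowerSeries ℚ) :
    PowerSeries.derivative ℚ (∏ j ∈ s, f j)
      = ∑ j ∈ s, (PowerSeries.derivative ℚ (f j)) * ∏ i ∈ s.erase j, f i := by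
  induction s using Finset.induction_on with
  | empty => simp
  | @insert a s ha ih =>
    rw [Finset.prod_insert ha, Derivation.leibniz, ih, Finset.sum_insert ha]
    rw [Finset.erase_insert ha]
    rw [smul_eq_mul, smul_eq_mul, Finset.mul_sum]
    rw [add_comm]
    congr 1
    · exact mul_comm _ _
    · apply Finset.sum_congr rfl
      intro j hj
      have hja : j ≠ a := fun h => ha (h ▸ hj)
      rw [Finset.erase_insert_of_ne (Ne.symm hja), Finset.prod_insert (fun h => ha (Finset.erase_subset _ _ h))]
      ring

noncomputable def nF (k j : ℕ) : PowerSeries ℚ :=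
  1 - PowerSeries.C ((k : ℚ)⁻¹ ^ j) * PowerSeries.X ^ j

lemma constCoeff_nF (k j : ℕ) (hj : 1 ≤ j) :
    PowerSeries.constantCoeff (nF k j) = 1 := by
  simp [nF, zero_pow (by omega : j ≠ 0)]

lemma deriv_nF (k j : ℕ) (hj : 1 ≤ j) :
    PowerSeries.derivative ℚ (nF k j)
      = PowerSeries.C (-(j : ℚ) * (k : ℚ)⁻¹ ^ j) * PowerSeries.X ^ (j - 1) := by
  have hX : PowerSeries.derivative ℚ ((PowerSeries.X : PowerSeries ℚ) ^ j)
      = (j : PowerSeries ℚ) * PowerSeries.X ^ (j - 1) := by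
    rw [Derivation.leibniz_pow, PowerSeries.derivative_X, smul_eq_mul, mul_one, nsmul_eq_mul]
  rw [nF, map_sub, Derivation.map_one_eq_zero, zero_sub, Derivation.leibniz,
    PowerSeries.derivative_C, smul_zero, add_zero, smul_eq_mul, hX]
  have hj' : (j : PowerSeries ℚ) = PowerSeries.C (j : ℚ) := by rw [map_natCast]
  have hC : PowerSeries.C (-(j : ℚ) * (k : ℚ)⁻¹ ^ j)
      = -(PowerSeries.C (j : ℚ) * PowerSeries.C ((k : ℚ)⁻¹ ^ j)) := by
    rw [← map_mul, ← map_neg]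
    congr 1
    ring
  rw [hj', hC]
  ring

noncomputable def ny (k j : ℕ) : PowerSeries ℚ :=
  PowerSeries.C ((k : ℚ)⁻¹ ^ j) * PowerSeries.X ^ j

noncomputable def nq (k N j : ℕ) : PowerSeries ℚ :=
  PowerSeries.C (-(j : ℚ) * (k : ℚ)⁻¹ ^ j) * PowerSeries.X ^ (j - 1) *
    ∑ i ∈ Finset.range (N + 1), (ny k j) ^ i

noncomputable def nr (k N j : ℕ) : PowerSeries ℚ :=
  PowerSeries.C (-(j : ℚ) * (k : ℚ)⁻¹ ^ j) * PowerSeries.X ^ (j - 1) * (ny k j) ^ (N + 1)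

lemma nF_eq (k j : ℕ) : nF k j = 1 - ny k j := rfl

lemma deriv_nF_decomp (k N j : ℕ) (hj : 1 ≤ j) :
    PowerSeries.derivative ℚ (nF k j) = nq k N j * nF k j + nr k N j := by
  have hgeom := geom_sum_mul (ny k j) (N + 1)
  rw [deriv_nF k j hj, nq, nr, nF_eq]
  linear_combination (PowerSeries.C (-(j : ℚ) * (k : ℚ)⁻¹ ^ j)
    * PowerSeries.X ^ (j - 1)) * hgeom

lemma X_pow_dvd_nr (k N j : ℕ) (hj : 1 ≤ j) :
    (PowerSeries.X : PowerSeries ℚ) ^ (N - 1) ∣ nr k N j := by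
  have h1 : (ny k j) ^ (N + 1)
      = PowerSeries.C (((k : ℚ)⁻¹ ^ j) ^ (N + 1)) * PowerSeries.X ^ (j * (N + 1)) := by
    rw [ny, mul_pow, ← map_pow]
    ring
  rw [nr, h1]
  have h2 : (PowerSeries.X : PowerSeries ℚ) ^ (N - 1) ∣ PowerSeries.X ^ (j * (N + 1)) :=
    pow_dvd_pow _ (le_trans (by omega : N - 1 ≤ 1 * (N + 1)) (Nat.mul_le_mul_right _ hj))
  obtain ⟨t, ht⟩ := h2
  exact ⟨PowerSeries.C (-(j : ℚ) * (k : ℚ)⁻¹ ^ j) * PowerSeries.X ^ (j - 1) *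
    PowerSeries.C (((k : ℚ)⁻¹ ^ j) ^ (N + 1)) * t, by rw [ht]; ring⟩

lemma nq_eq (k N j : ℕ) : nq k N j = ∑ i ∈ Finset.range (N + 1),
    PowerSeries.C ((-(j : ℚ) * (k : ℚ)⁻¹ ^ j) * ((k : ℚ)⁻¹ ^ j) ^ i)
      * PowerSeries.X ^ (j - 1 + j * i) := by
  rw [nq, Finset.mul_sum]
  apply Finset.sum_congr rfl
  intro i _
  rw [ny, mul_pow, ← map_pow]
  conv_rhs => rw [map_mul, pow_add, pow_mul]
  ring

lemma coeff_nq (k N j n : ℕ) : PowerSeries.coeff n (nq k N j)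
    = ∑ i ∈ Finset.range (N + 1),
      (if n = j - 1 + j * i then (-(j : ℚ) * (k : ℚ)⁻¹ ^ j) * ((k : ℚ)⁻¹ ^ j) ^ i else 0) := by
  rw [nq_eq, map_sum]
  apply Finset.sum_congr rfl
  intro i _
  rw [PowerSeries.coeff_C_mul, PowerSeries.coeff_X_pow]
  split_ifs <;> ring

noncomputable def nG (k N : ℕ) : PowerSeries ℚ :=
  ∑ j ∈ Finset.Icc 1 N, ((necklaceCount j k).toNat : PowerSeries ℚ) * nq k N j

lemma coeff_nG (k N n : ℕ) (hk : 1 ≤ k) (hn : n + 1 < N) :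
    PowerSeries.coeff n (nG k N) = -1 := by
  have hkQ : (k : ℚ) ≠ 0 := by
    have : (0 : ℚ) < k := by exact_mod_cast hk
    exact this.ne'
  rw [nG, map_sum]
  have hterm : ∀ j ∈ Finset.Icc 1 N,
      PowerSeries.coeff n (((necklaceCount j k).toNat : PowerSeries ℚ) * nq k N j)
      = if j ∣ n + 1 then
          -((j : ℚ) * ((necklaceCount j k).toNat : ℚ) * (k : ℚ)⁻¹ ^ (n + 1)) else 0 := by
    intro j hj
    simp only [Finset.mem_Icc] at hj
    have hj1 : 1 ≤ j := hj.1
    have hcast : ((necklaceCount j k).toNat : PowerSeries ℚ)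
        = PowerSeries.C (((necklaceCount j k).toNat : ℚ)) := by
      rw [map_natCast]
    rw [hcast, PowerSeries.coeff_C_mul, coeff_nq, Finset.mul_sum]
    by_cases hdvd : j ∣ n + 1
    · rw [if_pos hdvd]
      obtain ⟨t, ht⟩ := hdvd
      obtain ⟨s, rfl⟩ : ∃ s, t = s + 1 := by
        rcases t with _ | s
        · exfalso; omega
        · exact ⟨s, rfl⟩
      have hts : j * (s + 1) = j * s + j := by ring
      rw [Finset.sum_eq_single s]
      · have hcond : n = j - 1 + j * s := by
          set A := j * s with hA
          omega
        rw [if_pos hcond]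
        have hexp : (-(j : ℚ) * (k : ℚ)⁻¹ ^ j) * ((k : ℚ)⁻¹ ^ j) ^ s
            = -((j : ℚ) * (k : ℚ)⁻¹ ^ (n + 1)) := by
          rw [← pow_mul, ← neg_mul, mul_assoc, ← pow_add]
          have : j + j * s = n + 1 := by
            set A := j * s with hA
            omega
          rw [this]
        rw [hexp]
        ring
      · intro i hi hine
        have : n ≠ j - 1 + j * i := by
          intro hcon
          apply hine
          have h1 : j * (i + 1) = j * i + j := by ring
          have h2 : j * i + j = n + 1 := by
            set A := j * i with hA
            omega
          have : j * (i + 1) = j * (s + 1) := by omega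
          have := Nat.eq_of_mul_eq_mul_left (by omega : 0 < j) this
          omega
        rw [if_neg this, mul_zero]
      · intro hmem
        exfalso
        apply hmem
        rw [Finset.mem_range]
        have : s + 1 ≤ j * (s + 1) := Nat.le_mul_of_pos_left _ (by omega)
        omega
    · rw [if_neg hdvd]
      apply Finset.sum_eq_zero
      intro i _
      have : n ≠ j - 1 + j * i := by
        intro hcon
        apply hdvd
        refine ⟨i + 1, ?_⟩
        have h1 : j * (i + 1) = j * i + j := by ring
        set A := j * i with hA
        omega
      rw [if_neg this, mul_zero]
  rw [Finset.sum_congr rfl hterm]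
  rw [Finset.sum_ite, Finset.sum_const_zero, add_zero]
  have hfil : (Finset.Icc 1 N).filter (fun j => j ∣ n + 1) = (n + 1).divisors := by
    ext d
    simp only [Finset.mem_filter, Finset.mem_Icc, Nat.mem_divisors]
    constructor
    · rintro ⟨⟨h1, h2⟩, h3⟩
      exact ⟨h3, by omega⟩
    · rintro ⟨h1, -⟩
      have hd1 : 1 ≤ d := Nat.pos_of_dvd_of_pos h1 (by omega)
      have hd2 : d ≤ n + 1 := Nat.le_of_dvd (by omega) h1
      exact ⟨⟨hd1, by omega⟩, h1⟩
  rw [hfil]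
  have : ∑ j ∈ (n + 1).divisors,
      -((j : ℚ) * ((necklaceCount j k).toNat : ℚ) * (k : ℚ)⁻¹ ^ (n + 1))
      = -((k : ℚ)⁻¹ ^ (n + 1)) * ∑ j ∈ (n + 1).divisors,
        (j : ℚ) * ((necklaceCount j k).toNat : ℚ) := by
    rw [Finset.mul_sum]
    apply Finset.sum_congr rfl
    intro j _
    ring
  rw [this, gauss_toNat (n + 1) k (by omega) hk]
  rw [inv_pow, neg_mul, inv_mul_cancel₀ (by positivity)]

lemma stepF (k N : ℕ) (hk : 1 ≤ k) :
    (PowerSeries.X : PowerSeries ℚ) ^ (N - 1) ∣ nG k N * (1 - PowerSeries.X) + 1 := by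
  rw [PowerSeries.X_pow_dvd_iff]
  intro n hn
  have hsplit : nG k N * (1 - PowerSeries.X) + 1
      = nG k N - nG k N * PowerSeries.X + 1 := by ring
  rw [hsplit, map_add, map_sub]
  match n, hn with
  | 0, hn =>
    rw [PowerSeries.coeff_zero_mul_X, coeff_nG k N 0 hk (by omega), PowerSeries.coeff_one]
    norm_num
  | (m + 1), hn =>
    rw [PowerSeries.coeff_succ_mul_X, coeff_nG k N (m + 1) hk (by omega),
      coeff_nG k N m hk (by omega), PowerSeries.coeff_one]
    norm_num

noncomputable def nA (k N : ℕ) : PowerSeries ℚ :=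
  ∏ j ∈ Finset.Icc 1 N, (nF k j) ^ ((necklaceCount j k).toNat)

noncomputable def nW (k N : ℕ) : PowerSeries ℚ := ∏ j ∈ Finset.Icc 1 N, nF k j

lemma constCoeff_nA (k N : ℕ) : PowerSeries.constantCoeff (nA k N) = 1 := by
  rw [nA, map_prod]
  apply Finset.prod_eq_one
  intro j hj
  rw [map_pow, constCoeff_nF k j (Finset.mem_Icc.mp hj).1, one_pow]

lemma constCoeff_nW (k N : ℕ) : PowerSeries.constantCoeff (nW k N) = 1 := by
  rw [nW, map_prod]
  apply Finset.prod_eq_one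
  intro j hj
  exact constCoeff_nF k j (Finset.mem_Icc.mp hj).1

lemma stepD (k N : ℕ) (hk : 1 ≤ k) :
    (PowerSeries.X : PowerSeries ℚ) ^ (N - 1) ∣
      PowerSeries.derivative ℚ (nA k N) * (1 - PowerSeries.X) + nA k N := by
  classical
  set s := Finset.Icc 1 N with hs
  set R : PowerSeries ℚ :=
    ∑ j ∈ s, (((necklaceCount j k).toNat : PowerSeries ℚ) * nr k N j
      * ∏ i ∈ s.erase j, nF k i) with hR
  have h1 : PowerSeries.derivative ℚ (nA k N) * nW k N
      = nA k N * (nG k N * nW k N + R) := by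
    rw [nA, derivative_finset_prod, Finset.sum_mul]
    have hper : ∀ j ∈ s,
        PowerSeries.derivative ℚ ((nF k j) ^ ((necklaceCount j k).toNat))
            * (∏ i ∈ s.erase j, (nF k i) ^ ((necklaceCount i k).toNat)) * nW k N
        = nA k N * (((necklaceCount j k).toNat : PowerSeries ℚ) * (nq k N j * nW k N
            + nr k N j * ∏ i ∈ s.erase j, nF k i)) := by
      intro j hj
      have hj1 : 1 ≤ j := (Finset.mem_Icc.mp hj).1
      have hFH : nF k j * ∏ i ∈ s.erase j, nF k i = nW k N :=
        Finset.mul_prod_erase s _ hj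
      have hFP : (nF k j) ^ ((necklaceCount j k).toNat)
          * ∏ i ∈ s.erase j, (nF k i) ^ ((necklaceCount i k).toNat) = nA k N :=
        Finset.mul_prod_erase s (fun i => (nF k i) ^ ((necklaceCount i k).toNat)) hj
      have hD := deriv_nF_decomp k N j hj1
      rw [Derivation.leibniz_pow, hD]
      cases hmj : (necklaceCount j k).toNat with
      | zero => simp
      | succ t =>
        rw [smul_eq_mul, nsmul_eq_mul, ← hFH, ← hFP, hmj]
        simp only [Nat.add_sub_cancel]
        push_cast
        ring
    rw [Finset.sum_congr rfl hper, ← Finset.mul_sum]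
    congr 1
    have hsplit : ∀ j ∈ s, ((necklaceCount j k).toNat : PowerSeries ℚ) * (nq k N j * nW k N
        + nr k N j * ∏ i ∈ s.erase j, nF k i)
        = (((necklaceCount j k).toNat : PowerSeries ℚ) * nq k N j) * nW k N
          + ((necklaceCount j k).toNat : PowerSeries ℚ) * nr k N j
            * ∏ i ∈ s.erase j, nF k i := by
      intro j _
      ring
    rw [Finset.sum_congr rfl hsplit, Finset.sum_add_distrib, ← Finset.sum_mul, hR, nG]
  have h2 : (PowerSeries.derivative ℚ (nA k N) * (1 - PowerSeries.X) + nA k N) * nW k N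
      = nA k N * ((nG k N * (1 - PowerSeries.X) + 1) * nW k N
        + R * (1 - PowerSeries.X)) := by
    linear_combination (1 - PowerSeries.X) * h1
  have hdvd1 : (PowerSeries.X : PowerSeries ℚ) ^ (N - 1)
      ∣ (nG k N * (1 - PowerSeries.X) + 1) * nW k N := (stepF k N hk).mul_right _
  have hdvdR : (PowerSeries.X : PowerSeries ℚ) ^ (N - 1) ∣ R := by
    apply Finset.dvd_sum
    intro j hj
    exact ((X_pow_dvd_nr k N j (Finset.mem_Icc.mp hj).1).mul_left _).mul_right _
  have hdvd : (PowerSeries.X : PowerSeries ℚ) ^ (N - 1)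
      ∣ (PowerSeries.derivative ℚ (nA k N) * (1 - PowerSeries.X) + nA k N) * nW k N := by
    rw [h2]
    exact Dvd.dvd.mul_left (dvd_add hdvd1 (hdvdR.mul_right _)) _
  have hWu : IsUnit (nW k N) := by
    rw [PowerSeries.isUnit_iff_constantCoeff, constCoeff_nW]
    exact isUnit_one
  obtain ⟨u, hu⟩ := hWu
  rw [← hu] at hdvd
  exact (Units.dvd_mul_right).mp hdvd

/-- `∏_{j ≥ 1} (1 - u^j/k^j)^{-f_{j,k}} = 1/(1-u)`: since the factor for `j` is
`1 + O(u^j)`, the infinite product is expressed via all truncations. -/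
theorem necklace_product_identity (k : ℕ) (hk : 1 ≤ k) (N : ℕ) :
    PowerSeries.trunc N
        (∏ j ∈ Finset.Icc 1 N,
          ((1 - (PowerSeries.C (R := ℚ)) (((k : ℚ)) ⁻¹ ^ j) * PowerSeries.X ^ j)⁻¹) ^
            ((necklaceCount j k).toNat))
      = PowerSeries.trunc N ((1 - PowerSeries.X)⁻¹ : PowerSeries ℚ) := by
  rcases Nat.eq_zero_or_pos N with hN0 | hN1
  · subst hN0
    simp [PowerSeries.trunc_zero']
  have hAne : PowerSeries.constantCoeff (nA k N) ≠ 0 := by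
    rw [constCoeff_nA]
    exact one_ne_zero
  have h1Xc : PowerSeries.constantCoeff ((1 : PowerSeries ℚ) - PowerSeries.X) = 1 := by
    simp
  have h1Xne : PowerSeries.constantCoeff ((1 : PowerSeries ℚ) - PowerSeries.X) ≠ 0 := by
    rw [h1Xc]; exact one_ne_zero
  -- the product is (nA k N)⁻¹
  have hPA : (∏ j ∈ Finset.Icc 1 N, ((nF k j)⁻¹) ^ ((necklaceCount j k).toNat))
      = (nA k N)⁻¹ := by
    rw [PowerSeries.eq_inv_iff_mul_eq_one hAne, nA, ← Finset.prod_mul_distrib]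
    apply Finset.prod_eq_one
    intro j hj
    rw [← mul_pow, PowerSeries.inv_mul_cancel _ (by
      rw [constCoeff_nF k j (Finset.mem_Icc.mp hj).1]; exact one_ne_zero), one_pow]
  -- X^N divides (1 - X) - nA
  have hD1X : PowerSeries.derivative ℚ ((1 : PowerSeries ℚ) - PowerSeries.X)
      = -1 := by
    rw [map_sub, PowerSeries.derivative_X, Derivation.map_one_eq_zero]
    ring
  have hNdvd : (PowerSeries.X : PowerSeries ℚ) ^ N
      ∣ ((1 : PowerSeries ℚ) - PowerSeries.X) - nA k N := by
    have h0 : PowerSeries.constantCoeff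
        (((1 : PowerSeries ℚ) - PowerSeries.X) - nA k N) = 0 := by
      rw [map_sub, h1Xc, constCoeff_nA]
      ring
    have hd : (PowerSeries.X : PowerSeries ℚ) ^ (N - 1) ∣
        (PowerSeries.derivative ℚ (((1 : PowerSeries ℚ) - PowerSeries.X) - nA k N))
          * ((1 : PowerSeries ℚ) - PowerSeries.X)
        - (((1 : PowerSeries ℚ) - PowerSeries.X) - nA k N)
          * (PowerSeries.derivative ℚ ((1 : PowerSeries ℚ) - PowerSeries.X)) := by
      have heq : (PowerSeries.derivative ℚ (((1 : PowerSeries ℚ) - PowerSeries.X) - nA k N))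
          * ((1 : PowerSeries ℚ) - PowerSeries.X)
          - (((1 : PowerSeries ℚ) - PowerSeries.X) - nA k N)
            * (PowerSeries.derivative ℚ ((1 : PowerSeries ℚ) - PowerSeries.X))
          = -(PowerSeries.derivative ℚ (nA k N) * (1 - PowerSeries.X) + nA k N) := by
        rw [map_sub, hD1X]
        ring
      rw [heq]
      exact (stepD k N hk).neg_right
    have := ode_unique _ _ (N - 1) h0 h1Xc hd
    rwa [Nat.sub_add_cancel hN1] at this
  -- transfer to inverses
  have e1 : (nA k N)⁻¹ * nA k N = 1 := PowerSeries.inv_mul_cancel _ hAne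
  have e2 : ((1 : PowerSeries ℚ) - PowerSeries.X)
      * ((1 : PowerSeries ℚ) - PowerSeries.X)⁻¹ = 1 :=
    PowerSeries.mul_inv_cancel _ h1Xne
  have hdiff : (nA k N)⁻¹ - ((1 : PowerSeries ℚ) - PowerSeries.X)⁻¹
      = (nA k N)⁻¹ * (((1 : PowerSeries ℚ) - PowerSeries.X) - nA k N)
        * ((1 : PowerSeries ℚ) - PowerSeries.X)⁻¹ := by
    linear_combination ((1 : PowerSeries ℚ) - PowerSeries.X)⁻¹ * e1 - (nA k N)⁻¹ * e2
  have hdvd2 : (PowerSeries.X : PowerSeries ℚ) ^ N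
      ∣ (nA k N)⁻¹ - ((1 : PowerSeries ℚ) - PowerSeries.X)⁻¹ := by
    rw [hdiff]
    exact (hNdvd.mul_left _).mul_right _
  rw [PowerSeries.X_pow_dvd_iff] at hdvd2
  have hgoal : (∏ j ∈ Finset.Icc 1 N,
      ((1 - PowerSeries.C (((k : ℚ)) ⁻¹ ^ j) * PowerSeries.X ^ j)⁻¹) ^
        ((necklaceCount j k).toNat)) = (nA k N)⁻¹ := hPA
  rw [hgoal]
  apply Polynomial.ext
  intro n
  rw [PowerSeries.coeff_trunc, PowerSeries.coeff_trunc]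
  split_ifs with h
  · have := hdvd2 n h
    rw [map_sub] at this
    linarith [this]
  · rfl
end
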